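/- For every integer n ≥ 5, the distinguishing threshold of the Kneser graph K(n,2) equals (n² − 3n + 6)/2, i.e., θ(K(n,2)) = (n² − 3n + 6)/2. In particular, the distinguishing threshold of the Petersen graph K(5,2) is 8. -/

import Mathlib

open SimpleGraph

def IsDistinguishing {V : Type*} {k : ℕ} (G : SimpleGraph V) (c : V → Fin k) : Prop :=
  ∀ α : G ≃g G, (∀ v, c (α v) = c v) → ∀ v, α v = v

noncomputable def Phi {V : Type*} (G : SimpleGraph V) (k : ℕ) : ℕ :=
  Nat.card (Quot (fun c₁ c₂ : {c : V → Fin k // IsDistinguishing G c} =>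
    ∃ α : G ≃g G, ∀ v, c₁.1 v = c₂.1 (α v)))

noncomputable def phi {V : Type*} (G : SimpleGraph V) (k : ℕ) : ℕ :=
  Nat.card (Quot (fun c₁ c₂ : {c : V → Fin k // IsDistinguishing G c ∧ Function.Surjective c} =>
    ∃ α : G ≃g G, ∀ v, c₁.1 v = c₂.1 (α v)))

noncomputable def theta {V : Type*} (G : SimpleGraph V) : ℕ :=
  sInf {t | ∀ k, t ≤ k → ∀ c : V → Fin k, Function.Surjective c → IsDistinguishing G c}

def stirling2 : ℕ → ℕ → ℕ
  | 0, 0 => 1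
  | 0, _ + 1 => 0
  | _ + 1, 0 => 0
  | n + 1, k + 1 => (k + 1) * stirling2 n (k + 1) + stirling2 n k

def IsDCPartition {V : Type*} [DecidableEq V] [Fintype V] (G : SimpleGraph V)
    (P : Finpartition (Finset.univ : Finset V)) : Prop :=
  ∀ α : G ≃g G, (∀ p ∈ P.parts, p.image ⇑α = p) → ∀ v, α v = v

def IsDPartition {V : Type*} [DecidableEq V] [Fintype V] (G : SimpleGraph V)
    (P : Finpartition (Finset.univ : Finset V)) : Prop :=
  ∀ α : G ≃g G, P.parts.image (fun p => p.image ⇑α) = P.parts → ∀ v, α v = v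

def PartEquiv {V : Type*} [DecidableEq V] [Fintype V] (G : SimpleGraph V)
    (P₁ P₂ : Finpartition (Finset.univ : Finset V)) : Prop :=
  ∃ α : G ≃g G, P₁.parts.image (fun p => p.image ⇑α) = P₂.parts

noncomputable def psi {V : Type*} [DecidableEq V] [Fintype V] (G : SimpleGraph V) (k : ℕ) : ℕ :=
  Nat.card (Quot (fun P₁ P₂ : {P : Finpartition (Finset.univ : Finset V) //
      IsDCPartition G P ∧ P.parts.card = k} => PartEquiv G P₁.1 P₂.1))

noncomputable def PsiAtMost {V : Type*} [DecidableEq V] [Fintype V] (G : SimpleGraph V) (k : ℕ) : ℕ :=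
  Nat.card (Quot (fun P₁ P₂ : {P : Finpartition (Finset.univ : Finset V) //
      IsDCPartition G P ∧ P.parts.card ≤ k} => PartEquiv G P₁.1 P₂.1))

noncomputable def PiAtMost {V : Type*} [DecidableEq V] [Fintype V] (G : SimpleGraph V) (k : ℕ) : ℕ :=
  Nat.card (Quot (fun P₁ P₂ : {P : Finpartition (Finset.univ : Finset V) //
      P.parts.card ≤ k} => PartEquiv G P₁.1 P₂.1))

noncomputable def XiAtMost {V : Type*} [DecidableEq V] [Fintype V] (G : SimpleGraph V) (k : ℕ) : ℕ :=
  Nat.card (Quot (fun P₁ P₂ : {P : Finpartition (Finset.univ : Finset V) //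
      IsDPartition G P ∧ P.parts.card ≤ k} => PartEquiv G P₁.1 P₂.1))

def kneserGraph2 (n : ℕ) : SimpleGraph {s : Finset (Fin n) // s.card = 2} where
  Adj a b := Disjoint a.1 b.1
  symm := ⟨fun a b h => h.symm⟩
  loopless := by
    constructor
    rintro ⟨s, hs⟩ h
    simp only [disjoint_self, Finset.bot_eq_empty] at h
    simp [h] at hs

def lexProd {V W : Type*} (X : SimpleGraph V) (Y : SimpleGraph W) : SimpleGraph (V × W) where
  Adj a b := X.Adj a.1 b.1 ∨ (a.1 = b.1 ∧ Y.Adj a.2 b.2)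
  symm := by
    constructor
    rintro ⟨x, y⟩ ⟨x', y'⟩ (h | ⟨h, h'⟩)
    · exact Or.inl h.symm
    · exact Or.inr ⟨h.symm, h'.symm⟩
  loopless := by
    constructor
    rintro ⟨x, y⟩ (h | ⟨-, h⟩)
    · exact X.irrefl h
    · exact Y.irrefl h

def IsNaturalAut {V W : Type*} (X : SimpleGraph V) (Y : SimpleGraph W)
    (μ : lexProd X Y ≃g lexProd X Y) : Prop :=
  ∀ x : V, ∃ x' : V, (fun p => μ p) '' ({x} ×ˢ (Set.univ : Set W)) = {x'} ×ˢ (Set.univ : Set W)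

noncomputable def distNumber {V : Type*} (G : SimpleGraph V) : ℕ :=
  sInf {k | ∃ c : V → Fin k, IsDistinguishing G c}

namespace ThetaKneser

open Finset

variable {n : ℕ}

abbrev V (n : ℕ) := {s : Finset (Fin n) // s.card = 2}

def mk2 (i x : Fin n) (h : i ≠ x) : V n := ⟨{i, x}, Finset.card_pair h⟩

lemma pair_eq {s : Finset (Fin n)} (hs : s.card = 2) {x y : Fin n}
    (hx : x ∈ s) (hy : y ∈ s) (hxy : x ≠ y) : s = {x, y} := by
  refine (Finset.eq_of_subset_of_card_le ?_ ?_).symm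
  · exact Finset.insert_subset hx (Finset.singleton_subset_iff.2 hy)
  · rw [hs, Finset.card_pair hxy]

lemma star_helper {A B C D : Finset (Fin n)} (hA : A.card = 2) (hB : B.card = 2)
    (hC : C.card = 2) (hD : D.card = 2)
    (hAB : A ≠ B) (hDA : D ≠ A) (hDB : D ≠ B) (hDC : D ≠ C)
    (iCA : (C ∩ A).Nonempty) (iCB : (C ∩ B).Nonempty)
    (iDA : (D ∩ A).Nonempty) (iDB : (D ∩ B).Nonempty) (iDC : (D ∩ C).Nonempty)
    {p : Fin n} (hpA : p ∈ A) (hpB : p ∈ B) (hpC : p ∉ C) : False := by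
  obtain ⟨u, hu⟩ := iCA
  rw [Finset.mem_inter] at hu
  have hup : u ≠ p := fun h => hpC (h ▸ hu.1)
  have hAe : A = {p, u} := pair_eq hA hpA hu.2 (Ne.symm hup)
  obtain ⟨u', hu'⟩ := iCB
  rw [Finset.mem_inter] at hu'
  have hu'p : u' ≠ p := fun h => hpC (h ▸ hu'.1)
  have hBe : B = {p, u'} := pair_eq hB hpB hu'.2 (Ne.symm hu'p)
  have huu' : u ≠ u' := by
    intro h; exact hAB (by rw [hAe, hBe, h])
  have hCe : C = {u, u'} := pair_eq hC hu.1 hu'.1 huu'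
  by_cases hpD : p ∈ D
  · obtain ⟨w, hw⟩ := iDC
    rw [Finset.mem_inter] at hw
    have hwp : w ≠ p := fun h => hpC (h ▸ hw.2)
    have hDe : D = {p, w} := pair_eq hD hpD hw.1 (Ne.symm hwp)
    have : w = u ∨ w = u' := by
      have := hw.2; rw [hCe] at this
      simpa using this
    rcases this with h | h
    · exact hDA (by rw [hDe, hAe, h])
    · exact hDB (by rw [hDe, hBe, h])
  · obtain ⟨v, hv⟩ := iDA
    rw [Finset.mem_inter] at hv
    have hvu : v = u := by
      have := hv.2; rw [hAe] at this
      rcases Finset.mem_insert.1 this with h | h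
      · exact absurd (h ▸ hv.1) hpD
      · simpa using h
    obtain ⟨v', hv'⟩ := iDB
    rw [Finset.mem_inter] at hv'
    have hv'u : v' = u' := by
      have := hv'.2; rw [hBe] at this
      rcases Finset.mem_insert.1 this with h | h
      · exact absurd (h ▸ hv'.1) hpD
      · simpa using h
    have hDe : D = {u, u'} := pair_eq hD (hvu ▸ hv.1) (hv'u ▸ hv'.1) huu'
    exact hDC (by rw [hDe, hCe])

lemma exists_notin (hn : 5 ≤ n) (a b c d : Fin n) :
    ∃ y : Fin n, y ≠ a ∧ y ≠ b ∧ y ≠ c ∧ y ≠ d := by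
  by_contra h
  push_neg at h
  have hsub : (Finset.univ : Finset (Fin n)) ⊆ {a, b, c, d} := by
    intro y _
    simp only [Finset.mem_insert, Finset.mem_singleton]
    by_cases h1 : y = a; · exact Or.inl h1
    by_cases h2 : y = b; · exact Or.inr (Or.inl h2)
    by_cases h3 : y = c; · exact Or.inr (Or.inr (Or.inl h3))
    exact Or.inr (Or.inr (Or.inr (h y h1 h2 h3)))
  have hu := Finset.card_le_card hsub
  rw [Finset.card_univ, Fintype.card_fin] at hu
  have h1 := Finset.card_insert_le a ({b, c, d} : Finset (Fin n))
  have h2 := Finset.card_insert_le b ({c, d} : Finset (Fin n))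
  have h3 := Finset.card_insert_le c ({d} : Finset (Fin n))
  have h5 : ({d} : Finset (Fin n)).card = 1 := Finset.card_singleton d
  omega

lemma mk2_ne {i x y : Fin n} (hx : i ≠ x) (hy : i ≠ y) (hxy : x ≠ y) :
    mk2 i x hx ≠ mk2 i y hy := by
  intro h
  have h1 : ({i, x} : Finset (Fin n)) = {i, y} := congrArg Subtype.val h
  have hx2 : x ∈ ({i, y} : Finset (Fin n)) := by
    rw [← h1]; simp
  rcases Finset.mem_insert.1 hx2 with h2 | h2
  · exact hx (h2.symm)
  · exact hxy (by simpa using h2)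

lemma mem_mk2_left (i x : Fin n) (h : i ≠ x) : i ∈ (mk2 i x h).1 :=
  Finset.mem_insert_self i {x}

lemma mem_mk2_right (i x : Fin n) (h : i ≠ x) : x ∈ (mk2 i x h).1 := by
  simp [mk2]

lemma eq_mk2 {s : V n} {i : Fin n} (hi : i ∈ s.1) :
    ∃ (x : Fin n) (h : i ≠ x), s = mk2 i x h := by
  obtain ⟨a, b, hab, hs⟩ := Finset.card_eq_two.1 s.2
  have hi' : i = a ∨ i = b := by
    have := hi; rw [hs] at this; simpa using this
  rcases hi' with rfl | rfl
  · exact ⟨b, hab, Subtype.ext hs⟩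
  · exact ⟨a, Ne.symm hab, Subtype.ext (by rw [hs, Finset.pair_comm]; rfl)⟩

lemma image_inter_nonempty (α : kneserGraph2 n ≃g kneserGraph2 n) {s t : V n}
    (h : (s.1 ∩ t.1).Nonempty) : ((α s).1 ∩ (α t).1).Nonempty := by
  have hna : ¬ (kneserGraph2 n).Adj s t := by
    intro had
    obtain ⟨x, hx⟩ := h
    rw [Finset.mem_inter] at hx
    exact (Finset.disjoint_left.1 had) hx.1 hx.2
  have : ¬ (kneserGraph2 n).Adj (α s) (α t) := fun had => hna (α.map_adj_iff.1 had)
  obtain ⟨a, ha1, ha2⟩ := Finset.not_disjoint_iff.1 this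
  exact ⟨a, Finset.mem_inter.2 ⟨ha1, ha2⟩⟩

lemma exists_star (hn : 5 ≤ n) (α : kneserGraph2 n ≃g kneserGraph2 n) (i : Fin n) :
    ∃ j, ∀ s : V n, i ∈ s.1 → j ∈ (α s).1 := by
  obtain ⟨x₁, hx₁⟩ := exists_notin hn i i i i
  obtain ⟨x₂, hx₂⟩ := exists_notin hn i x₁ x₁ x₁
  set s₁ := mk2 i x₁ (Ne.symm hx₁.1) with hs₁
  set s₂ := mk2 i x₂ (Ne.symm hx₂.1) with hs₂
  have hs12 : s₁ ≠ s₂ := mk2_ne _ _ (Ne.symm hx₂.2.1)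
  have hiAB : ((α s₁).1 ∩ (α s₂).1).Nonempty :=
    image_inter_nonempty α ⟨i, Finset.mem_inter.2 ⟨mem_mk2_left _ _ _, mem_mk2_left _ _ _⟩⟩
  obtain ⟨j, hj⟩ := hiAB
  rw [Finset.mem_inter] at hj
  refine ⟨j, ?_⟩
  intro s hi
  obtain ⟨x, hix, rfl⟩ := eq_mk2 hi
  by_cases hxx1 : x = x₁
  · subst hxx1; exact hj.1
  by_cases hxx2 : x = x₂
  · subst hxx2; exact hj.2
  obtain ⟨x₃, hx₃⟩ := exists_notin hn i x₁ x₂ x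
  by_contra hjD
  set s₃ := mk2 i x₃ (Ne.symm hx₃.1) with hs₃
  have hval : ∀ (u v : V n), u ≠ v → (α u).1 ≠ (α v).1 := by
    intro u v huv he
    exact huv (α.injective (Subtype.ext he))
  have hint : ∀ (u v : V n), i ∈ u.1 → i ∈ v.1 → ((α u).1 ∩ (α v).1).Nonempty := by
    intro u v hu hv
    exact image_inter_nonempty α ⟨i, Finset.mem_inter.2 ⟨hu, hv⟩⟩
  refine star_helper (α s₁).2 (α s₂).2 (α (mk2 i x hix)).2 (α s₃).2
    (hval _ _ hs12) (hval _ _ (mk2_ne _ _ hx₃.2.1)) (hval _ _ (mk2_ne _ _ hx₃.2.2.1))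
    (hval _ _ (mk2_ne _ _ hx₃.2.2.2))
    (hint _ _ ?_ ?_) (hint _ _ ?_ ?_) (hint _ _ ?_ ?_) (hint _ _ ?_ ?_) (hint _ _ ?_ ?_)
    hj.1 hj.2 hjD
  all_goals exact mem_mk2_left _ _ _

lemma exists_perm (hn : 5 ≤ n) (α : kneserGraph2 n ≃g kneserGraph2 n) :
    ∃ π : Equiv.Perm (Fin n), ∀ s : V n, (α s).1 = s.1.image π := by
  choose f hf using fun i => exists_star hn α i
  have hinj : Function.Injective f := by
    intro i j hij
    by_contra hne
    obtain ⟨k, hk⟩ := exists_notin hn i j j j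
    obtain ⟨l, hl⟩ := exists_notin hn i j k k
    have h1 : f i ∈ (α (mk2 i k (Ne.symm hk.1))).1 := hf i _ (mem_mk2_left _ _ _)
    have h2 : f j ∈ (α (mk2 j l (Ne.symm hl.2.1))).1 := hf j _ (mem_mk2_left _ _ _)
    have hadj : (kneserGraph2 n).Adj (mk2 i k (Ne.symm hk.1)) (mk2 j l (Ne.symm hl.2.1)) := by
      show Disjoint _ _
      rw [Finset.disjoint_left]
      intro a ha hb
      simp only [mk2, Finset.mem_insert, Finset.mem_singleton] at ha hb
      rcases ha with rfl | rfl <;> rcases hb with rfl | rfl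
      · exact hne rfl
      · exact hl.1 rfl
      · exact hk.2.1 rfl
      · exact hl.2.2.2 rfl
    have hd : Disjoint (α (mk2 i k (Ne.symm hk.1))).1 (α (mk2 j l (Ne.symm hl.2.1))).1 :=
      α.map_adj_iff.2 hadj
    rw [hij] at h1
    exact (Finset.disjoint_left.1 hd) h1 h2
  refine ⟨Equiv.ofBijective f (Finite.injective_iff_bijective.1 hinj), ?_⟩
  intro s
  show (α s).1 = s.1.image f
  obtain ⟨a, b, hab, hs⟩ := Finset.card_eq_two.1 s.2
  have ha : f a ∈ (α s).1 := hf a s (by rw [hs]; simp)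
  have hb : f b ∈ (α s).1 := hf b s (by rw [hs]; simp)
  have hfab : f a ≠ f b := fun h => hab (hinj h)
  have : (α s).1 = {f a, f b} := pair_eq (α s).2 ha hb hfab
  rw [this, hs, Finset.image_insert, Finset.image_singleton]

def permAut (π : Equiv.Perm (Fin n)) : kneserGraph2 n ≃g kneserGraph2 n :=
  ⟨⟨fun s => ⟨s.1.image π, by rw [Finset.card_image_of_injective _ π.injective, s.2]⟩,
    fun s => ⟨s.1.image π.symm, by rw [Finset.card_image_of_injective _ π.symm.injective, s.2]⟩,
    fun s => by
      apply Subtype.ext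
      simp [Finset.image_image],
    fun s => by
      apply Subtype.ext
      simp [Finset.image_image]⟩,
   by
    intro a b
    exact Finset.disjoint_image π.injective⟩

lemma permAut_apply (π : Equiv.Perm (Fin n)) (s : V n) :
    (permAut π s).1 = s.1.image π := rfl

lemma key_bound (hn : 5 ≤ n) {k : ℕ} (hk : n.choose 2 - (n - 2) + 1 ≤ k)
    (c : V n → Fin k) (hc : Function.Surjective c) :
    IsDistinguishing (kneserGraph2 n) c := by
  intro α hα
  by_contra hv
  push_neg at hv
  obtain ⟨v₀, hv₀⟩ := hv
  obtain ⟨π, hπ⟩ := exists_perm hn α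
  have hπne : ∃ a, π a ≠ a := by
    by_contra h
    push_neg at h
    apply hv₀
    apply Subtype.ext
    rw [hπ]
    rw [Finset.image_congr (fun x _ => h x)]; exact Finset.image_id
  obtain ⟨a, ha⟩ := hπne
  set b := π a with hb
  have hba : b ≠ a := ha
  set T : Finset (Fin n) := Finset.univ \ {a, b} with hT
  have hTa : ∀ x ∈ T, a ≠ x := by
    intro x hx
    rw [hT, Finset.mem_sdiff] at hx
    intro h
    exact hx.2 (by simp [← h])
  have hTb : ∀ x ∈ T, b ≠ x := by
    intro x hx
    rw [hT, Finset.mem_sdiff] at hx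
    intro h
    exact hx.2 (by simp [← h])
  set v : {x // x ∈ T} → V n := fun x => mk2 a x.1 (hTa x.1 x.2) with hvdef
  set w : {x // x ∈ T} → V n := fun x => α (v x) with hwdef
  have hwval : ∀ x, (w x).1 = {b, π x.1} := by
    intro x
    rw [hwdef]
    show (α (v x)).1 = _
    rw [hπ, hvdef]
    show Finset.image π {a, x.1} = _
    rw [Finset.image_insert, Finset.image_singleton, ← hb]
  have hbv : ∀ x, b ∉ (v x).1 := by
    intro x hbx
    rcases Finset.mem_insert.1 hbx with h | h
    · exact hba h
    · exact hTb x.1 x.2 (by simpa using h)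
  have hbw : ∀ x, b ∈ (w x).1 := by
    intro x; rw [hwval]; simp
  set W : Finset (V n) := Finset.univ.image w with hW
  have hwinj : Function.Injective w := by
    intro x y hxy
    have := α.injective hxy
    have h2 : ({a, x.1} : Finset (Fin n)) = {a, y.1} := congrArg Subtype.val this
    apply Subtype.ext
    have hx2 : x.1 ∈ ({a, y.1} : Finset (Fin n)) := by rw [← h2]; simp
    rcases Finset.mem_insert.1 hx2 with h | h
    · exact absurd h.symm (hTa x.1 x.2)
    · simpa using h
  have hcard_W : W.card = n - 2 := by
    rw [hW, Finset.card_image_of_injective _ hwinj, Finset.card_univ, Fintype.card_coe, hT,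
      Finset.card_sdiff_of_subset (Finset.subset_univ _), Finset.card_univ, Fintype.card_fin,
      Finset.card_pair (Ne.symm hba)]
  have hcov : ∀ y : Fin k, ∃ u ∈ Wᶜ, c u = y := by
    intro y
    obtain ⟨u, hu⟩ := hc y
    by_cases huW : u ∈ W
    · rw [hW] at huW
      obtain ⟨x, _, rfl⟩ := Finset.mem_image.1 huW
      refine ⟨v x, ?_, ?_⟩
      · rw [Finset.mem_compl, hW]
        intro hvW
        obtain ⟨x', _, hx'⟩ := Finset.mem_image.1 hvW
        exact hbv x (hx' ▸ hbw x')
      · rw [← hu, hwdef]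
        exact (hα (v x)).symm
    · exact ⟨u, Finset.mem_compl.2 huW, hu⟩
  have hsub : (Finset.univ : Finset (Fin k)) ⊆ Wᶜ.image c := by
    intro y _
    obtain ⟨u, hu1, hu2⟩ := hcov y
    exact Finset.mem_image.2 ⟨u, hu1, hu2⟩
  have hk2 : k ≤ Wᶜ.card := by
    calc k = (Finset.univ : Finset (Fin k)).card := by rw [Finset.card_univ, Fintype.card_fin]
    _ ≤ (Wᶜ.image c).card := Finset.card_le_card hsub
    _ ≤ Wᶜ.card := Finset.card_image_le
  have hNc : Fintype.card (V n) = n.choose 2 := by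
    rw [Fintype.card_finset_len, Fintype.card_fin]
  rw [Finset.card_compl, hcard_W, hNc] at hk2
  omega

lemma exists_bad (hn : 5 ≤ n) :
    ∃ c : V n → Fin (n.choose 2 - (n - 2)), Function.Surjective c ∧
      ¬ IsDistinguishing (kneserGraph2 n) c := by
  classical
  set z0 : Fin n := ⟨0, by omega⟩ with hz0
  set z1 : Fin n := ⟨1, by omega⟩ with hz1
  set z2 : Fin n := ⟨2, by omega⟩ with hz2
  have h01 : z0 ≠ z1 := by intro h; simpa [hz0, hz1] using congrArg Fin.val h
  have h02 : z0 ≠ z2 := by intro h; simpa [hz0, hz2] using congrArg Fin.val h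
  have h12 : z1 ≠ z2 := by intro h; simpa [hz1, hz2] using congrArg Fin.val h
  set τ := Equiv.swap z0 z1 with hτ
  set β := permAut (n := n) τ with hβ
  have hβval : ∀ s : V n, (β s).1 = s.1.image τ := fun s => rfl
  have hmem : ∀ (s : Finset (Fin n)) (y : Fin n), y ∈ s.image τ ↔ τ y ∈ s := by
    intro s y
    rw [Finset.mem_image]
    constructor
    · rintro ⟨x, hx, rfl⟩; rwa [Equiv.swap_apply_self]
    · intro h; exact ⟨τ y, h, Equiv.swap_apply_self _ _ _⟩
  set cond : V n → Prop := fun s => z1 ∈ s.1 ∧ z0 ∉ s.1 with hcond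
  set canon : V n → V n := fun s => if cond s then β s else s with hcanon
  set R : Finset (V n) := Finset.univ.filter (fun s => ¬ cond s) with hR
  have hcanon_if : ∀ s, canon s = if cond s then β s else s := fun s => rfl
  have hcanonβ : ∀ s, canon (β s) = canon s := by
    intro s
    by_cases h0 : z0 ∈ s.1 <;> by_cases h1 : z1 ∈ s.1
    · have hβs : β s = s := by
        apply Subtype.ext
        rw [hβval]
        have hs : s.1 = {z0, z1} := pair_eq s.2 h0 h1 h01
        rw [hs, Finset.image_insert, Finset.image_singleton, Equiv.swap_apply_left,
          Equiv.swap_apply_right, Finset.pair_comm]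
      rw [hβs]
    · have hcs : ¬ cond s := fun hc => h1 hc.1
      have hc2 : cond (β s) := by
        constructor
        · rw [hβval, hmem, Equiv.swap_apply_right]; exact h0
        · rw [hβval, hmem, Equiv.swap_apply_left]; exact h1
      have hββ : β (β s) = s := by
        apply Subtype.ext
        rw [hβval, hβval, Finset.image_image]
        have hcg : ∀ x ∈ s.1, (⇑τ ∘ ⇑τ) x = x := fun x _ => Equiv.swap_apply_self _ _ _
        rw [Finset.image_congr hcg]; exact Finset.image_id
      rw [hcanon_if, hcanon_if, if_pos hc2, if_neg hcs, hββ]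
    · have hcs : cond s := ⟨h1, h0⟩
      have hc2 : ¬ cond (β s) := by
        intro hc
        apply h0
        have := hc.1
        rwa [hβval, hmem, Equiv.swap_apply_right] at this
      rw [hcanon_if, hcanon_if, if_neg hc2, if_pos hcs]
    · have hβs : β s = s := by
        apply Subtype.ext
        rw [hβval]
        have hcg : ∀ x ∈ s.1, τ x = x := by
          intro x hx
          apply Equiv.swap_apply_of_ne_of_ne
          · exact fun h => h0 (h ▸ hx)
          · exact fun h => h1 (h ▸ hx)
        rw [Finset.image_congr hcg]; exact Finset.image_id
      rw [hβs]
  have hcanonR : ∀ s, canon s ∈ R := by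
    intro s
    rw [hR, Finset.mem_filter]
    refine ⟨Finset.mem_univ _, ?_⟩
    by_cases h : cond s
    · rw [hcanon_if, if_pos h]
      intro hc
      exact hc.2 (by rw [hβval, hmem, Equiv.swap_apply_left]; exact h.1)
    · rw [hcanon_if, if_neg h]; exact h
  have hcanonId : ∀ s ∈ R, canon s = s := by
    intro s hs
    rw [hR, Finset.mem_filter] at hs
    rw [hcanon_if, if_neg hs.2]
  have hRcard : R.card = n.choose 2 - (n - 2) := by
    have hsplit := Finset.card_filter_add_card_filter_not
      (s := (Finset.univ : Finset (V n))) (p := cond)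
    have hNc : Fintype.card (V n) = n.choose 2 := by
      rw [Fintype.card_finset_len, Fintype.card_fin]
    set T' : Finset (Fin n) := Finset.univ \ {z0, z1} with hT'
    have hT'mem : ∀ x ∈ T', z1 ≠ x ∧ z0 ≠ x := by
      intro x hx
      rw [hT', Finset.mem_sdiff] at hx
      constructor
      · intro h; exact hx.2 (by simp [← h])
      · intro h; exact hx.2 (by simp [← h])
    set e : {x // x ∈ T'} → V n := fun x => mk2 z1 x.1 (hT'mem x.1 x.2).1 with he
    have heinj : Function.Injective e := by
      intro x y hxy
      have h2 : ({z1, x.1} : Finset (Fin n)) = {z1, y.1} := congrArg Subtype.val hxy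
      apply Subtype.ext
      have hx2 : x.1 ∈ ({z1, y.1} : Finset (Fin n)) := by rw [← h2]; simp
      rcases Finset.mem_insert.1 hx2 with h | h
      · exact absurd h.symm (hT'mem x.1 x.2).1
      · simpa using h
    have hBs : Finset.univ.filter cond = Finset.univ.image e := by
      ext s
      simp only [Finset.mem_filter, Finset.mem_univ, true_and, Finset.mem_image]
      constructor
      · intro hs
        obtain ⟨x, hx, rfl⟩ := eq_mk2 hs.1
        have hxT' : x ∈ T' := by
          rw [hT', Finset.mem_sdiff]
          refine ⟨Finset.mem_univ _, ?_⟩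
          simp only [Finset.mem_insert, Finset.mem_singleton]
          push_neg
          constructor
          · intro h
            subst h
            exact hs.2 (by simp [mk2])
          · exact fun h => hx h.symm
        exact ⟨⟨x, hxT'⟩, rfl⟩
      · rintro ⟨x, rfl⟩
        constructor
        · exact Finset.mem_insert_self _ _
        · intro h
          rcases Finset.mem_insert.1 h with h | h
          · exact h01 h
          · exact (hT'mem x.1 x.2).2 (by simpa using h)
    have hBcard : (Finset.univ.filter cond).card = n - 2 := by
      rw [hBs, Finset.card_image_of_injective _ heinj, Finset.card_univ, Fintype.card_coe,
        hT', Finset.card_sdiff_of_subset (Finset.subset_univ _), Finset.card_univ, Fintype.card_fin,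
        Finset.card_pair h01]
    rw [Finset.card_univ, hNc] at hsplit
    have hsplit2 : (Finset.univ.filter cond).card + R.card = n.choose 2 := hsplit
    have hdvd : 2 ∣ n * (n - 1) := by
      have h := Nat.even_mul_succ_self (n - 1)
      rw [show n - 1 + 1 = n by omega] at h
      rw [mul_comm]
      exact h.two_dvd
    have hA : 2 * n.choose 2 = n * (n - 1) := by
      rw [Nat.choose_two_right]; exact Nat.mul_div_cancel' hdvd
    have hB : 5 * (n - 1) ≤ n * (n - 1) := Nat.mul_le_mul_right _ (by omega)
    omega
  have hmcard : Fintype.card {s // s ∈ R} = n.choose 2 - (n - 2) := by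
    rw [Fintype.card_coe, hRcard]
  set e2 := Fintype.equivFinOfCardEq hmcard with he2
  refine ⟨fun s => e2 ⟨canon s, hcanonR s⟩, ?_, ?_⟩
  · intro y
    refine ⟨(e2.symm y).1, ?_⟩
    have hc : canon (e2.symm y).1 = (e2.symm y).1 := hcanonId _ (e2.symm y).2
    show e2 ⟨canon (e2.symm y).1, _⟩ = y
    rw [show (⟨canon (e2.symm y).1, hcanonR _⟩ : {s // s ∈ R}) = e2.symm y from Subtype.ext hc]
    exact e2.apply_symm_apply y
  · intro hd
    have h1 : ∀ v, e2 ⟨canon (β v), hcanonR _⟩ = e2 ⟨canon v, hcanonR v⟩ :=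
      fun v => congrArg e2 (Subtype.ext (hcanonβ v))
    have h2 := hd β h1 (mk2 z0 z2 h02)
    have h3 : z1 ∈ (β (mk2 z0 z2 h02)).1 := by
      rw [hβval, hmem, Equiv.swap_apply_right]
      exact Finset.mem_insert_self _ _
    rw [h2] at h3
    rcases Finset.mem_insert.1 h3 with h | h
    · exact h01 h.symm
    · exact h12 (by simpa using h)


lemma theta_eq (hn : 5 ≤ n) : theta (kneserGraph2 n) = (n ^ 2 - 3 * n + 6) / 2 := by
  have hdvd : 2 ∣ n * (n - 1) := by
    have h := Nat.even_mul_succ_self (n - 1)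
    rw [show n - 1 + 1 = n by omega] at h
    rw [mul_comm]
    exact h.two_dvd
  have hA : 2 * n.choose 2 = n * (n - 1) := by
    rw [Nat.choose_two_right]; exact Nat.mul_div_cancel' hdvd
  have hB : 5 * (n - 1) ≤ n * (n - 1) := Nat.mul_le_mul_right _ (by omega)
  have harith : (n ^ 2 - 3 * n + 6) / 2 = n.choose 2 - (n - 2) + 1 := by
    have hpow : n ^ 2 = n * n := pow_two n
    have hnn : n * n = n * (n - 1) + n := by
      have h := (rfl : n * ((n - 1) + 1) = n * ((n - 1) + 1))
      nth_rewrite 2 [show (n - 1) + 1 = n by omega] at h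
      rw [← h]; ring
    rw [hpow, hnn, ← hA]
    omega
  rw [harith]
  unfold theta
  have hmem : (n.choose 2 - (n - 2) + 1) ∈ {t | ∀ k, t ≤ k → ∀ c : V n → Fin k,
      Function.Surjective c → IsDistinguishing (kneserGraph2 n) c} :=
    fun k hk c hc => key_bound hn hk c hc
  refine le_antisymm (Nat.sInf_le hmem) ?_
  refine le_csInf ⟨_, hmem⟩ ?_
  intro t ht
  by_contra hlt
  push_neg at hlt
  obtain ⟨c, hcs, hcd⟩ := exists_bad hn
  exact hcd (ht _ (by omega) c hcs)

end ThetaKneser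

theorem theta_kneserGraph :
    (∀ n : ℕ, 5 ≤ n → theta (kneserGraph2 n) = (n ^ 2 - 3 * n + 6) / 2) ∧
    theta (kneserGraph2 5) = 8 := by
  refine ⟨fun n hn => ThetaKneser.theta_eq hn, ?_⟩
  rw [ThetaKneser.theta_eq (by norm_num : 5 ≤ 5)]
  norm_num
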